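/- For all a, b > 0 with a ≠ b, H(a,b)^(5/12) · C(a,b)^(7/12) < M(a,b) < C(a,b), and these bounds are sharp: H^α C^(1-α) < M for all a ≠ b iff α ≥ 5/12, and M < H^β C^(1-β) for all a ≠ b iff β ≤ 0. -/

import Mathlib

open Real Set Filter Topology

noncomputable def M (a b : ℝ) : ℝ := (a - b) / (2 * Real.arsinh ((a - b) / (a + b)))
noncomputable def H (a b : ℝ) : ℝ := 2 * a * b / (a + b)
noncomputable def C (a b : ℝ) : ℝ := (a ^ 2 + b ^ 2) / (a + b)

lemma sqrt_ub {x : ℝ} (hx0 : 0 ≤ x) : Real.sqrt (1+x^2) ≤ 1 + x^2/2 := by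
  have h1 : (0:ℝ) ≤ 1 + x^2 := by positivity
  have h2 : Real.sqrt (1+x^2) ^ 2 = 1 + x^2 := Real.sq_sqrt h1
  have h3 : 0 ≤ Real.sqrt (1+x^2) := Real.sqrt_nonneg _
  nlinarith [sq_nonneg (x*x)]

lemma arsinh_lb' {x : ℝ} (hx0 : 0 ≤ x) (hx1 : x ≤ 1) :
    x - x^3/6 ≤ Real.arsinh x := by
  have key : MonotoneOn (fun x : ℝ => Real.arsinh x - (x - x^3/6)) (Icc 0 1) := by
    have hder : ∀ y : ℝ, HasDerivAt (fun x : ℝ => Real.arsinh x - (x - x^3/6))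
        ((Real.sqrt (1+y^2))⁻¹ - (1 - y^2/2)) y := by
      intro y
      have h1 := Real.hasDerivAt_arsinh y
      have h2 : HasDerivAt (fun x : ℝ => x - x^3/6) (1 - y^2/2) y := by
        have := ((hasDerivAt_pow 3 y).div_const 6)
        have h := (hasDerivAt_id y).sub this
        refine HasDerivAt.congr_deriv h ?_
        rw [show (3:ℕ)-1 = 2 from rfl]; push_cast; ring
      exact h1.sub h2
    apply monotoneOn_of_deriv_nonneg (convex_Icc 0 1)
    · exact fun y _ => ((hder y).continuousAt).continuousWithinAt
    · exact fun y _ => ((hder y).differentiableAt).differentiableWithinAt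
    · intro y hy
      rw [(hder y).deriv]
      rw [interior_Icc] at hy
      have h1 : (0:ℝ) < 1 + y^2 := by positivity
      have hs : 0 < Real.sqrt (1+y^2) := Real.sqrt_pos.2 h1
      have h2 : Real.sqrt (1+y^2) ^ 2 = 1 + y^2 := Real.sq_sqrt h1.le
      have hub : Real.sqrt (1+y^2) ≤ 1 + y^2/2 := sqrt_ub hy.1.le
      have : (1 - y^2/2) * Real.sqrt (1+y^2) ≤ 1 := by nlinarith [sq_nonneg y, sq_nonneg (y*y)]
      have h4 : (1 - y^2/2) ≤ (Real.sqrt (1+y^2))⁻¹ := by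
        rw [inv_eq_one_div, le_div_iff₀ hs]; exact this
      linarith
  have h := key (show (0:ℝ) ∈ Icc (0:ℝ) 1 from ⟨le_refl 0, zero_le_one⟩) ⟨hx0, hx1⟩ hx0
  simp [Real.arsinh_zero] at h
  linarith

noncomputable def Fn : ℝ → ℝ := fun x =>
  12 * Real.log x - 12 * Real.log (Real.arsinh x) - 5 * Real.log (1 - x^2) - 7 * Real.log (1 + x^2)

lemma Fn_hasDerivAt {y : ℝ} (hy0 : 0 < y) (hy1 : y < 1) :
    HasDerivAt Fn
      (12 * (1/y) - 12 * ((Real.sqrt (1+y^2))⁻¹ / Real.arsinh y)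
        - 5 * ((-(2*y)) / (1 - y^2)) - 7 * ((2*y) / (1 + y^2))) y := by
  have hA : Real.arsinh y ≠ 0 := ne_of_gt (Real.arsinh_pos_iff.2 hy0)
  have h1 : HasDerivAt (fun x : ℝ => Real.log x) (1/y) y := by
    simpa using (Real.hasDerivAt_log hy0.ne')
  have h2 : HasDerivAt (fun x : ℝ => Real.log (Real.arsinh x))
      ((Real.sqrt (1+y^2))⁻¹ / Real.arsinh y) y :=
    (Real.hasDerivAt_arsinh y).log hA
  have h3' : HasDerivAt (fun x : ℝ => 1 - x^2) (-(2*y)) y := by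
    simpa using (hasDerivAt_pow 2 y).const_sub (1:ℝ)
  have h3 : HasDerivAt (fun x : ℝ => Real.log (1 - x^2)) ((-(2*y)) / (1 - y^2)) y :=
    h3'.log (by nlinarith)
  have h4' : HasDerivAt (fun x : ℝ => 1 + x^2) (2*y) y := by
    simpa using (hasDerivAt_pow 2 y).const_add (1:ℝ)
  have h4 : HasDerivAt (fun x : ℝ => Real.log (1 + x^2)) ((2*y) / (1 + y^2)) y :=
    h4'.log (by nlinarith)
  exact (((h1.const_mul 12).sub (h2.const_mul 12)).sub (h3.const_mul 5)).sub (h4.const_mul 7)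

lemma sqrt_lb' {x : ℝ} (hx0 : 0 ≤ x) (hx1 : x ≤ 1) :
    1 + x^2/2 - x^4/8 ≤ Real.sqrt (1+x^2) := by
  have h1 : (0:ℝ) ≤ 1 + x^2 := by positivity
  have hx2 : x^2 ≤ 1 := by nlinarith
  have ha : (0:ℝ) ≤ 1 + x^2/2 - x^4/8 := by nlinarith [sq_nonneg (x*x)]
  rw [Real.le_sqrt ha h1]
  nlinarith [sq_nonneg x, sq_nonneg (x*x), sq_nonneg (x*x*x), mul_nonneg (mul_nonneg hx0 hx0) hx0]


lemma keyP {y : ℝ} (hy0 : 0 < y) (hy1 : y < 1) :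
    12 * y * (1 - y^4) < Real.arsinh y * Real.sqrt (1+y^2) * (12 - 4*y^2 + 12*y^4) := by
  have hA := arsinh_lb' hy0.le hy1.le
  have hS := sqrt_lb' hy0.le hy1.le
  have hApos : 0 < y - y^3/6 := by nlinarith
  have hSpos : (0:ℝ) < 1 + y^2/2 - y^4/8 := by nlinarith [sq_nonneg (y*y)]
  have hQpos : (0:ℝ) < 12 - 4*y^2 + 12*y^4 := by nlinarith [sq_nonneg (y*y)]
  have step : (y - y^3/6) * (1 + y^2/2 - y^4/8) * (12 - 4*y^2 + 12*y^4)
      ≤ Real.arsinh y * Real.sqrt (1+y^2) * (12 - 4*y^2 + 12*y^4) := by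
    apply mul_le_mul_of_nonneg_right _ hQpos.le
    exact mul_le_mul hA hS hSpos.le (le_trans hApos.le hA)
  have poly : 12 * y * (1 - y^4) < (y - y^3/6) * (1 + y^2/2 - y^4/8) * (12 - 4*y^2 + 12*y^4) := by
    have h5 : 0 < y^5 := pow_pos hy0 5
    have h7 : 0 ≤ y^7 * (1 - y^2) := by
      apply mul_nonneg (pow_nonneg hy0.le 7); nlinarith
    have h11 : 0 ≤ y^11 := pow_nonneg hy0.le 11
    nlinarith [h5, h7, h11]
  linarith

lemma Fn_deriv_pos {y : ℝ} (hy0 : 0 < y) (hy1 : y < 1) :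
    0 < 12 * (1/y) - 12 * ((Real.sqrt (1+y^2))⁻¹ / Real.arsinh y)
        - 5 * ((-(2*y)) / (1 - y^2)) - 7 * ((2*y) / (1 + y^2)) := by
  have hApos : 0 < Real.arsinh y := Real.arsinh_pos_iff.2 hy0
  have hSpos : 0 < Real.sqrt (1+y^2) := Real.sqrt_pos.2 (by positivity)
  have h1 : (0:ℝ) < 1 - y^2 := by nlinarith
  have h2 : (0:ℝ) < 1 + y^2 := by positivity
  have e1 : 12 * (1/y) - 5 * ((-(2*y)) / (1 - y^2)) - 7 * ((2*y) / (1 + y^2))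
      = (12 - 4*y^2 + 12*y^4) / (y * (1 - y^4)) := by
    have hy4 : (0:ℝ) < 1 - y^4 := by nlinarith
    field_simp
    ring
  have e2 : 12 * ((Real.sqrt (1+y^2))⁻¹ / Real.arsinh y)
      = 12 / (Real.sqrt (1+y^2) * Real.arsinh y) := by
    field_simp
  have hy4' : y^4 < 1 := pow_lt_one₀ hy0.le hy1 (by norm_num)
  have hy4 : (0:ℝ) < y * (1 - y^4) := mul_pos hy0 (by linarith)
  have key : 12 / (Real.sqrt (1+y^2) * Real.arsinh y)
      < (12 - 4*y^2 + 12*y^4) / (y * (1 - y^4)) := by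
    rw [div_lt_div_iff₀ (by positivity) hy4]
    have := keyP hy0 hy1
    nlinarith [this]
  linarith [e1, e2, key]

lemma Fn_zero : Fn 0 = 0 := by
  simp [Fn, Real.arsinh_zero, Real.log_zero, Real.log_one]

lemma Fn_tendsto_zero : Tendsto Fn (𝓝[Ioo (0:ℝ) 1] 0) (𝓝 0) := by
  have hslope : Tendsto (fun x : ℝ => Real.arsinh x / x) (𝓝[≠] (0:ℝ)) (𝓝 1) := by
    have h := hasDerivAt_iff_tendsto_slope.1 (Real.hasDerivAt_arsinh 0)
    have : (Real.sqrt (1 + (0:ℝ)^2))⁻¹ = 1 := by norm_num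
    rw [this] at h
    refine h.congr (fun x => ?_)
    simp [slope_fun_def, Real.arsinh_zero]
    ring
  have hmono : 𝓝[Ioo (0:ℝ) 1] (0:ℝ) ≤ 𝓝[≠] (0:ℝ) :=
    nhdsWithin_mono 0 (fun x hx => ne_of_gt hx.1)
  have h1 : Tendsto (fun x : ℝ => x / Real.arsinh x) (𝓝[Ioo (0:ℝ) 1] 0) (𝓝 1) := by
    have := (hslope.mono_left hmono).inv₀ one_ne_zero
    simp only [inv_one] at this
    refine this.congr (fun x => ?_)
    rw [← one_div, one_div_div]
  have hlog1 : Tendsto (fun x : ℝ => 12 * Real.log (x / Real.arsinh x))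
      (𝓝[Ioo (0:ℝ) 1] 0) (𝓝 0) := by
    have := ((Real.continuousAt_log one_ne_zero).tendsto.comp h1).const_mul (12:ℝ)
    simpa using this
  have hlog2 : Tendsto (fun x : ℝ => 5 * Real.log (1 - x^2)) (𝓝[Ioo (0:ℝ) 1] 0) (𝓝 0) := by
    have hc : ContinuousAt (fun x : ℝ => 5 * Real.log (1 - x^2)) 0 := by
      have : ContinuousAt (fun x : ℝ => 1 - x^2) 0 := by fun_prop
      have := this.log (by norm_num)
      exact this.const_mul 5
    have h' : Tendsto (fun x : ℝ => 5 * Real.log (1 - x^2)) (𝓝 0) (𝓝 0) := by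
      simpa using hc.tendsto
    exact h'.mono_left nhdsWithin_le_nhds
  have hlog3 : Tendsto (fun x : ℝ => 7 * Real.log (1 + x^2)) (𝓝[Ioo (0:ℝ) 1] 0) (𝓝 0) := by
    have hc : ContinuousAt (fun x : ℝ => 7 * Real.log (1 + x^2)) 0 := by
      have : ContinuousAt (fun x : ℝ => 1 + x^2) 0 := by fun_prop
      have := this.log (by norm_num)
      exact this.const_mul 7
    have h' : Tendsto (fun x : ℝ => 7 * Real.log (1 + x^2)) (𝓝 0) (𝓝 0) := by
      simpa using hc.tendsto
    exact h'.mono_left nhdsWithin_le_nhds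
  have hcomb : Tendsto (fun x : ℝ => 12 * Real.log (x / Real.arsinh x)
      - 5 * Real.log (1 - x^2) - 7 * Real.log (1 + x^2)) (𝓝[Ioo (0:ℝ) 1] 0) (𝓝 0) := by
    have := (hlog1.sub hlog2).sub hlog3
    simpa using this
  refine hcomb.congr' ?_
  filter_upwards [self_mem_nhdsWithin] with x hx
  have hx0 : (0:ℝ) < x := hx.1
  have hA : Real.arsinh x ≠ 0 := ne_of_gt (Real.arsinh_pos_iff.2 hx0)
  rw [Real.log_div hx0.ne' hA]
  unfold Fn
  ring

lemma Fn_pos {x : ℝ} (hx0 : 0 < x) (hx1 : x < 1) : 0 < Fn x := by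
  have hmono : StrictMonoOn Fn (Ico (0:ℝ) 1) := by
    apply strictMonoOn_of_deriv_pos (convex_Ico 0 1)
    · intro y hy
      rcases eq_or_lt_of_le hy.1 with h | h
      · subst h
        rw [← continuousWithinAt_diff_self]
        show Tendsto Fn (𝓝[Ico (0:ℝ) 1 \ {0}] 0) (𝓝 (Fn 0))
        rw [Set.Ico_diff_left, Fn_zero]
        exact Fn_tendsto_zero
      · exact ((Fn_hasDerivAt h hy.2).continuousAt).continuousWithinAt
    · intro y hy
      rw [interior_Ico] at hy
      rw [(Fn_hasDerivAt hy.1 hy.2).deriv]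
      exact Fn_deriv_pos hy.1 hy.2
  have := hmono (left_mem_Ico.2 one_pos) ⟨hx0.le, hx1⟩ hx0
  rwa [Fn_zero] at this

lemma L2 {x : ℝ} (hx0 : 0 < x) (hx1 : x < 1) :
    (1-x^2) ^ ((5:ℝ)/12) * (1+x^2) ^ ((7:ℝ)/12) < x / Real.arsinh x := by
  have hu : (0:ℝ) < 1 - x^2 := by nlinarith
  have hv : (0:ℝ) < 1 + x^2 := by positivity
  have hA : 0 < Real.arsinh x := Real.arsinh_pos_iff.2 hx0
  have hF := Fn_pos hx0 hx1
  unfold Fn at hF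
  have hL : (0:ℝ) < (1-x^2) ^ ((5:ℝ)/12) * (1+x^2) ^ ((7:ℝ)/12) := by positivity
  have hR : (0:ℝ) < x / Real.arsinh x := by positivity
  rw [← Real.log_lt_log_iff hL hR]
  rw [Real.log_mul (by positivity) (by positivity), Real.log_rpow hu, Real.log_rpow hv,
    Real.log_div hx0.ne' hA.ne']
  linarith

lemma L1 {x : ℝ} (hx0 : 0 < x) (hx1 : x < 1) : x / Real.arsinh x < 1 + x^2 := by
  have hA : 0 < Real.arsinh x := Real.arsinh_pos_iff.2 hx0
  rw [div_lt_iff₀ hA]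
  have h := arsinh_lb' hx0.le hx1.le
  have h2 : (1+x^2)*(x - x^3/6) ≤ (1+x^2)*Real.arsinh x :=
    mul_le_mul_of_nonneg_left h (by positivity)
  have h5 : x^5 ≤ x^3 := by
    calc x^5 = x^3 * x^2 := by ring
      _ ≤ x^3 * 1 := mul_le_mul_of_nonneg_left (by nlinarith) (pow_pos hx0 3).le
      _ = x^3 := mul_one _
  nlinarith [h2, h5, pow_pos hx0 3]

lemma arsinh_ub_one {x : ℝ} (hx1 : x ≤ 1) : Real.arsinh x ≤ 1 := by
  have h1 : x ≤ Real.sinh 1 := by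
    have he : (2.7182818283 : ℝ) < Real.exp 1 := Real.exp_one_gt_d9
    have he2 : Real.exp (-1) = (Real.exp 1)⁻¹ := by rw [Real.exp_neg]
    have he3 : (Real.exp 1)⁻¹ < 1/2 := by
      rw [inv_lt_comm₀ (by positivity) (by norm_num)]
      linarith
    have : Real.sinh 1 = (Real.exp 1 - Real.exp (-1)) / 2 := by
      rw [Real.sinh_eq]
    nlinarith
  calc Real.arsinh x ≤ Real.arsinh (Real.sinh 1) := Real.arsinh_le_arsinh.2 h1
    _ = 1 := Real.arsinh_sinh 1

-- counterexample point for alpha < 5/12, case alpha ≤ 0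
lemma L3a {α : ℝ} (hα : α ≤ 0) :
    ∃ x : ℝ, 0 < x ∧ x < 1 ∧ x / Real.arsinh x ≤ (1-x^2) ^ α * (1+x^2) ^ (1-α) := by
  refine ⟨1/2, by norm_num, by norm_num, ?_⟩
  have h1 : (1:ℝ) ≤ (1 - (1/2:ℝ)^2) ^ α :=
    Real.one_le_rpow_of_pos_of_le_one_of_nonpos (by norm_num) (by norm_num) hα
  have h2 : ((5:ℝ)/4) ≤ (1 + (1/2:ℝ)^2) ^ (1-α) := by
    have e : (1 + (1/2:ℝ)^2) = (5:ℝ)/4 := by norm_num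
    rw [e]
    calc ((5:ℝ)/4) = ((5:ℝ)/4) ^ (1:ℝ) := (Real.rpow_one _).symm
      _ ≤ ((5:ℝ)/4) ^ (1-α) := Real.rpow_le_rpow_of_exponent_le (by norm_num) (by linarith)
  have hA : ((1:ℝ)/2) - ((1:ℝ)/2)^3/6 ≤ Real.arsinh (1/2) := arsinh_lb' (by norm_num) (by norm_num)
  have hA0 : (0:ℝ) < Real.arsinh (1/2) := Real.arsinh_pos_iff.2 (by norm_num)
  have hL : ((1:ℝ)/2) / Real.arsinh (1/2) ≤ 24/23 := by
    rw [div_le_iff₀ hA0]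
    nlinarith
  have : (0:ℝ) < (1 - (1/2:ℝ)^2) ^ α := Real.rpow_pos_of_pos (by norm_num) _
  nlinarith [mul_le_mul h1 h2 (by norm_num) (le_trans zero_le_one h1)]

-- case 0 < α < 5/12
lemma L3b {α : ℝ} (hα0 : 0 < α) (hα : α < 5/12) :
    ∃ x : ℝ, 0 < x ∧ x < 1 ∧ x / Real.arsinh x ≤ (1-x^2) ^ α * (1+x^2) ^ (1-α) := by
  set u : ℝ := min (5/12 - α) (1/2) with hu_def
  have hu0 : 0 < u := lt_min (by linarith) (by norm_num)
  have hu1 : u ≤ 1/2 := min_le_right _ _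
  have huε : u ≤ 5/12 - α := min_le_left _ _
  refine ⟨Real.sqrt u, Real.sqrt_pos.2 hu0, ?_, ?_⟩
  · have : u < 1 := by linarith
    calc Real.sqrt u < Real.sqrt 1 := by
          exact Real.sqrt_lt_sqrt hu0.le this
      _ = 1 := Real.sqrt_one
  have hx2 : (Real.sqrt u)^2 = u := Real.sq_sqrt hu0.le
  rw [hx2]
  -- bounds
  have hb1 : (1-u) / (1 - (1-α)*u) ≤ (1-u) ^ α := by
    have hber : (1-u) ^ (1-α) ≤ 1 - (1-α)*u := by
      have := rpow_one_add_le_one_add_mul_self (s := -u) (p := 1-α)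
        (by linarith) (by linarith) (by linarith)
      calc (1-u) ^ (1-α) = (1 + (-u)) ^ (1-α) := by ring_nf
        _ ≤ 1 + (1-α) * (-u) := this
        _ = 1 - (1-α)*u := by ring
    have h1u : (0:ℝ) < 1 - u := by linarith
    have hden : (0:ℝ) < 1 - (1-α)*u := by nlinarith
    rw [div_le_iff₀ hden]
    have heq : (1-u) ^ α * ((1-u) ^ (1-α)) = 1 - u := by
      rw [← Real.rpow_add h1u]
      norm_num
    calc (1-u) = (1-u) ^ α * ((1-u) ^ (1-α)) := heq.symm
      _ ≤ (1-u) ^ α * (1 - (1-α)*u) := by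
          apply mul_le_mul_of_nonneg_left hber (Real.rpow_nonneg h1u.le _)
  have hb2 : (1+u) / (1 + α*u) ≤ (1+u) ^ (1-α) := by
    have hber : (1+u) ^ α ≤ 1 + α*u := by
      have := rpow_one_add_le_one_add_mul_self (s := u) (p := α)
        (by linarith) hα0.le (by linarith)
      linarith [this]
    have h1u : (0:ℝ) < 1 + u := by linarith
    have hden : (0:ℝ) < 1 + α*u := by nlinarith
    rw [div_le_iff₀ hden]
    have heq : (1+u) ^ (1-α) * ((1+u) ^ α) = 1 + u := by
      rw [← Real.rpow_add h1u]
      norm_num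
    calc (1+u) = (1+u) ^ (1-α) * ((1+u) ^ α) := heq.symm
      _ ≤ (1+u) ^ (1-α) * (1 + α*u) := by
          apply mul_le_mul_of_nonneg_left hber (Real.rpow_nonneg h1u.le _)
  -- upper bound for x/arsinh x
  set x := Real.sqrt u
  have hx0 : 0 < x := Real.sqrt_pos.2 hu0
  have hx1 : x ≤ 1 := by
    rw [show (1:ℝ) = Real.sqrt 1 from Real.sqrt_one.symm]
    exact Real.sqrt_le_sqrt (by linarith)
  have hA : x - x^3/6 ≤ Real.arsinh x := arsinh_lb' hx0.le hx1
  have hA0 : 0 < Real.arsinh x := Real.arsinh_pos_iff.2 hx0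
  have hub : x / Real.arsinh x ≤ 6 / (6 - u) := by
    rw [div_le_div_iff₀ hA0 (by linarith)]
    have hx3 : x^3 = x * u := by
      rw [pow_succ, hx2]; ring
    nlinarith [hA, hx3]
  -- final rational inequality
  have hden1 : (0:ℝ) < 1 - (1-α)*u := by nlinarith
  have hden2 : (0:ℝ) < 1 + α*u := by nlinarith
  have hrat : 6 / (6 - u) ≤ ((1-u) / (1 - (1-α)*u)) * ((1+u) / (1 + α*u)) := by
    rw [div_mul_div_comm, div_le_div_iff₀ (by linarith) (by positivity)]
    nlinarith [mul_nonneg (mul_nonneg hu0.le hu0.le) (mul_nonneg hα0.le (show (0:ℝ) ≤ 1-α by linarith)),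
      mul_nonneg (show (0:ℝ) ≤ 5/12 - α - u by linarith) hu0.le,
      mul_pos (mul_pos hu0 hu0) hu0]
  have hpos1 : (0:ℝ) ≤ (1-u)/(1-(1-α)*u) := by
    apply div_nonneg (by linarith); nlinarith
  have hpos2 : (0:ℝ) ≤ (1+u)/(1+α*u) := by
    apply div_nonneg (by linarith); nlinarith
  calc x / Real.arsinh x ≤ 6 / (6-u) := hub
    _ ≤ ((1-u)/(1-(1-α)*u)) * ((1+u)/(1+α*u)) := hrat
    _ ≤ (1-u) ^ α * (1+u) ^ (1-α) := by
        apply mul_le_mul hb1 hb2 hpos2 (Real.rpow_nonneg (by linarith) _)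

lemma L4 {β : ℝ} (hβ : 0 < β) :
    ∃ x : ℝ, 0 < x ∧ x < 1 ∧ (1-x^2) ^ β * (1+x^2) ^ (1-β) ≤ x / Real.arsinh x := by
  set δ : ℝ := min (1/2) ((1/4 : ℝ) ^ (1/β)) with hδ_def
  have hq : (0:ℝ) < (1/4 : ℝ) ^ (1/β) := Real.rpow_pos_of_pos (by norm_num) _
  have hδ0 : 0 < δ := lt_min (by norm_num) hq
  have hδh : δ ≤ 1/2 := min_le_left _ _
  refine ⟨Real.sqrt (1-δ), Real.sqrt_pos.2 (by linarith), ?_, ?_⟩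
  · exact (Real.sqrt_lt' one_pos).2 (by nlinarith)
  set x := Real.sqrt (1-δ)
  have hx2 : x^2 = 1-δ := Real.sq_sqrt (by linarith)
  have hx2' : (1:ℝ) - x^2 = δ := by rw [hx2]; ring
  have hxlb : 1/2 ≤ x := by
    have h14 : Real.sqrt (1/4) = 1/2 := by
      rw [show (1:ℝ)/4 = (1/2)^2 by norm_num, Real.sqrt_sq (by norm_num : (0:ℝ) ≤ 1/2)]
    have := Real.sqrt_le_sqrt (show (1:ℝ)/4 ≤ 1-δ by linarith)
    rwa [h14] at this
  have hx1 : x ≤ 1 := by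
    calc x ≤ Real.sqrt 1 := Real.sqrt_le_sqrt (by linarith)
      _ = 1 := Real.sqrt_one
  -- RHS lower bound
  have hA0 : 0 < Real.arsinh x := Real.arsinh_pos_iff.2 (by linarith)
  have hAub : Real.arsinh x ≤ 1 := arsinh_ub_one hx1
  have hRHS : (1:ℝ)/2 ≤ x / Real.arsinh x := by
    rw [le_div_iff₀ hA0]
    nlinarith
  -- LHS upper bound
  have h1 : (1-x^2) ^ β ≤ 1/4 := by
    rw [hx2']
    have hδle : δ ≤ (1/4 : ℝ) ^ (1/β) := min_le_right _ _
    calc δ ^ β ≤ ((1/4 : ℝ) ^ (1/β)) ^ β :=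
          Real.rpow_le_rpow hδ0.le hδle hβ.le
      _ = 1/4 := by
          rw [← Real.rpow_mul (by norm_num : (0:ℝ) ≤ 1/4),
            one_div_mul_cancel hβ.ne', Real.rpow_one]
  have h2 : (1+x^2) ^ (1-β) ≤ 2 := by
    rcases le_or_gt (1-β) 0 with h | h
    · calc (1+x^2) ^ (1-β) ≤ 1 :=
          Real.rpow_le_one_of_one_le_of_nonpos (by nlinarith) h
        _ ≤ 2 := by norm_num
    · have e1 : (1+x^2) ^ (1-β) ≤ 2 ^ (1-β) :=
        Real.rpow_le_rpow (by positivity) (by nlinarith) h.le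
      have e2 : (2:ℝ) ^ (1-β) ≤ 2 ^ (1:ℝ) :=
        Real.rpow_le_rpow_of_exponent_le (by norm_num) (by linarith)
      have e3 : (2:ℝ) ^ (1:ℝ) = 2 := Real.rpow_one 2
      linarith
  have hL0 : (0:ℝ) ≤ (1-x^2) ^ β := Real.rpow_nonneg (by rw [hx2']; linarith) _
  calc (1-x^2) ^ β * (1+x^2) ^ (1-β) ≤ (1/4) * 2 := by
        apply mul_le_mul h1 h2 (Real.rpow_nonneg (by nlinarith) _) (by norm_num)
    _ = 1/2 := by norm_num
    _ ≤ x / Real.arsinh x := hRHS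

lemma Hsymm (a b : ℝ) : H a b = H b a := by unfold H; ring_nf
lemma Csymm (a b : ℝ) : C a b = C b a := by unfold C; ring_nf
lemma Msymm (a b : ℝ) : M a b = M b a := by
  unfold M
  rw [show (b-a)/(b+a) = -((a-b)/(a+b)) by ring, Real.arsinh_neg]
  rw [show (2 : ℝ) * -Real.arsinh ((a-b)/(a+b)) = -(2 * Real.arsinh ((a-b)/(a+b))) by ring]
  rw [show b - a = -(a-b) by ring, neg_div_neg_eq]

lemma formulas {a b : ℝ} (hb : 0 < b) (hab : b < a) :
    0 < (a-b)/(a+b) ∧ (a-b)/(a+b) < 1 ∧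
    H a b = ((a+b)/2) * (1 - ((a-b)/(a+b))^2) ∧
    C a b = ((a+b)/2) * (1 + ((a-b)/(a+b))^2) ∧
    M a b = ((a+b)/2) * (((a-b)/(a+b)) / Real.arsinh ((a-b)/(a+b))) := by
  have hs : 0 < a + b := by linarith
  have hx0 : 0 < (a-b)/(a+b) := div_pos (by linarith) hs
  have hx1 : (a-b)/(a+b) < 1 := by rw [div_lt_one hs]; linarith
  refine ⟨hx0, hx1, ?_, ?_, ?_⟩
  · unfold H; field_simp; ring
  · unfold C; field_simp; ring
  · unfold M
    have hA : 0 < Real.arsinh ((a-b)/(a+b)) := Real.arsinh_pos_iff.2 hx0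
    field_simp

lemma prod_rpow_identity {x t : ℝ} (hx0 : 0 < x) (hx1 : x < 1) :
    (1-x^2) ^ t * (1+x^2) ^ (1-t) = (1+x^2) * ((1-x^2)/(1+x^2)) ^ t := by
  have hu : (0:ℝ) < 1 - x^2 := by nlinarith
  have hv : (0:ℝ) < 1 + x^2 := by positivity
  rw [Real.div_rpow hu.le hv.le, Real.rpow_sub hv, Real.rpow_one]
  field_simp

lemma prod_rpow_mono {x : ℝ} (hx0 : 0 < x) (hx1 : x < 1) {p q : ℝ} (hpq : p ≤ q) :
    (1-x^2) ^ q * (1+x^2) ^ (1-q) ≤ (1-x^2) ^ p * (1+x^2) ^ (1-p) := by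
  have hu : (0:ℝ) < 1 - x^2 := by nlinarith
  have hv : (0:ℝ) < 1 + x^2 := by positivity
  rw [prod_rpow_identity hx0 hx1, prod_rpow_identity hx0 hx1]
  have hr0 : (0:ℝ) < (1-x^2)/(1+x^2) := div_pos hu hv
  have hr1 : (1-x^2)/(1+x^2) ≤ 1 := by rw [div_le_one hv]; nlinarith
  exact mul_le_mul_of_nonneg_left
    (Real.rpow_le_rpow_of_exponent_ge hr0 hr1 hpq) hv.le

-- main inequality at the (a,b) level, for ordered case
lemma main_lt {a b α : ℝ} (hb : 0 < b) (hab : b < a) (hα : 5/12 ≤ α) :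
    H a b ^ α * C a b ^ (1-α) < M a b := by
  obtain ⟨hx0, hx1, hH, hC, hM⟩ := formulas hb hab
  set x := (a-b)/(a+b) with hx
  set s := (a+b)/2 with hs
  have hspos : 0 < s := by rw [hs]; linarith
  have hu : (0:ℝ) < 1 - x^2 := by nlinarith
  have hv : (0:ℝ) < 1 + x^2 := by positivity
  rw [hH, hC, hM]
  rw [Real.mul_rpow hspos.le hu.le, Real.mul_rpow hspos.le hv.le]
  have hsplit : s ^ α * (1-x^2) ^ α * (s ^ (1-α) * (1+x^2) ^ (1-α))
      = s * ((1-x^2) ^ α * (1+x^2) ^ (1-α)) := by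
    rw [show s ^ α * (1-x^2) ^ α * (s ^ (1-α) * (1+x^2) ^ (1-α))
        = (s ^ α * s ^ (1-α)) * ((1-x^2) ^ α * (1+x^2) ^ (1-α)) by ring,
      ← Real.rpow_add hspos]
    norm_num
  rw [hsplit]
  apply mul_lt_mul_of_pos_left _ hspos
  calc (1-x^2) ^ α * (1+x^2) ^ (1-α)
      ≤ (1-x^2) ^ ((5:ℝ)/12) * (1+x^2) ^ (1-(5:ℝ)/12) := prod_rpow_mono hx0 hx1 hα
    _ = (1-x^2) ^ ((5:ℝ)/12) * (1+x^2) ^ ((7:ℝ)/12) := by norm_num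
    _ < x / Real.arsinh x := L2 hx0 hx1

lemma main_ltC {a b : ℝ} (hb : 0 < b) (hab : b < a) : M a b < C a b := by
  obtain ⟨hx0, hx1, hH, hC, hM⟩ := formulas hb hab
  set x := (a-b)/(a+b) with hx
  set s := (a+b)/2 with hs
  have hspos : 0 < s := by rw [hs]; linarith
  rw [hC, hM]
  exact mul_lt_mul_of_pos_left (L1 hx0 hx1) hspos

lemma main_gtC {a b β : ℝ} (hb : 0 < b) (hab : b < a) (hβ : β ≤ 0) :
    M a b < H a b ^ β * C a b ^ (1-β) := by
  obtain ⟨hx0, hx1, hH, hC, hM⟩ := formulas hb hab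
  set x := (a-b)/(a+b) with hx
  set s := (a+b)/2 with hs
  have hspos : 0 < s := by rw [hs]; linarith
  have hu : (0:ℝ) < 1 - x^2 := by nlinarith
  have hv : (0:ℝ) < 1 + x^2 := by positivity
  rw [hH, hC, hM]
  rw [Real.mul_rpow hspos.le hu.le, Real.mul_rpow hspos.le hv.le]
  have hsplit : s ^ β * (1-x^2) ^ β * (s ^ (1-β) * (1+x^2) ^ (1-β))
      = s * ((1-x^2) ^ β * (1+x^2) ^ (1-β)) := by
    rw [show s ^ β * (1-x^2) ^ β * (s ^ (1-β) * (1+x^2) ^ (1-β))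
        = (s ^ β * s ^ (1-β)) * ((1-x^2) ^ β * (1+x^2) ^ (1-β)) by ring,
      ← Real.rpow_add hspos]
    norm_num
  rw [hsplit]
  apply mul_lt_mul_of_pos_left _ hspos
  calc x / Real.arsinh x < 1 + x^2 := L1 hx0 hx1
    _ = (1-x^2) ^ (0:ℝ) * (1+x^2) ^ (1-(0:ℝ)) := by
        rw [Real.rpow_zero]; norm_num
    _ ≤ (1-x^2) ^ β * (1+x^2) ^ (1-β) := prod_rpow_mono hx0 hx1 hβ

-- evaluation at (1+x, 1-x)
lemma eval_pt {x : ℝ} (hx0 : 0 < x) (hx1 : x < 1) :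
    H (1+x) (1-x) = 1 - x^2 ∧ C (1+x) (1-x) = 1 + x^2 ∧
    M (1+x) (1-x) = x / Real.arsinh x := by
  have h2 : (1+x) + (1-x) = 2 := by ring
  refine ⟨?_, ?_, ?_⟩
  · unfold H; rw [h2]; ring_nf
  · unfold C; rw [h2]; ring_nf
  · unfold M
    rw [show (1+x) - (1-x) = 2*x by ring, h2]
    rw [show (2*x)/2 = x by ring]
    have hA : 0 < Real.arsinh x := Real.arsinh_pos_iff.2 hx0
    rw [show 2*x = x*2 by ring, show (2:ℝ) * Real.arsinh x = Real.arsinh x * 2 by ring]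
    rw [mul_div_mul_right _ _ (by norm_num : (2:ℝ) ≠ 0)]

theorem stmt3 :
    (∀ a b : ℝ, 0 < a → 0 < b → a ≠ b →
      H a b ^ ((5 : ℝ) / 12) * C a b ^ ((7 : ℝ) / 12) < M a b ∧ M a b < C a b) ∧
    (∀ α : ℝ, (∀ a b : ℝ, 0 < a → 0 < b → a ≠ b →
      H a b ^ α * C a b ^ (1 - α) < M a b) ↔ 5 / 12 ≤ α) ∧
    (∀ β : ℝ, (∀ a b : ℝ, 0 < a → 0 < b → a ≠ b →
      M a b < H a b ^ β * C a b ^ (1 - β)) ↔ β ≤ 0) := by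
  have key1 : ∀ a b α : ℝ, 0 < a → 0 < b → a ≠ b → 5/12 ≤ α →
      H a b ^ α * C a b ^ (1-α) < M a b := by
    intro a b α ha hb hab hα
    rcases lt_or_gt_of_ne hab with h | h
    · rw [Hsymm, Csymm, Msymm]; exact main_lt ha h hα
    · exact main_lt hb h hα
  have key2 : ∀ a b : ℝ, 0 < a → 0 < b → a ≠ b → M a b < C a b := by
    intro a b ha hb hab
    rcases lt_or_gt_of_ne hab with h | h
    · rw [Csymm, Msymm]; exact main_ltC ha h
    · exact main_ltC hb h
  have key3 : ∀ a b β : ℝ, 0 < a → 0 < b → a ≠ b → β ≤ 0 →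
      M a b < H a b ^ β * C a b ^ (1-β) := by
    intro a b β ha hb hab hβ
    rcases lt_or_gt_of_ne hab with h | h
    · rw [Hsymm, Csymm, Msymm]; exact main_gtC ha h hβ
    · exact main_gtC hb h hβ
  refine ⟨?_, ?_, ?_⟩
  · intro a b ha hb hab
    constructor
    · have := key1 a b (5/12) ha hb hab (le_refl _)
      convert this using 3
      norm_num
    · exact key2 a b ha hb hab
  · intro α
    constructor
    · intro hyp
      by_contra hlt
      push_neg at hlt
      obtain ⟨x, hx0, hx1, hx⟩ :
          ∃ x : ℝ, 0 < x ∧ x < 1 ∧ x / Real.arsinh x ≤ (1-x^2) ^ α * (1+x^2) ^ (1-α) := by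
        rcases le_or_gt α 0 with h | h
        · exact L3a h
        · exact L3b h hlt
      obtain ⟨hH, hC, hM⟩ := eval_pt hx0 hx1
      have := hyp (1+x) (1-x) (by linarith) (by linarith) (by intro h; nlinarith [h])
      rw [hH, hC, hM] at this
      linarith
    · intro hα a b ha hb hab
      exact key1 a b α ha hb hab hα
  · intro β
    constructor
    · intro hyp
      by_contra hlt
      push_neg at hlt
      obtain ⟨x, hx0, hx1, hx⟩ := L4 hlt
      obtain ⟨hH, hC, hM⟩ := eval_pt hx0 hx1
      have := hyp (1+x) (1-x) (by linarith) (by linarith) (by intro h; nlinarith [h])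
      rw [hH, hC, hM] at this
      linarith
    · intro hβ a b ha hb hab
      exact key3 a b β ha hb hab hβ
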